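/- Suppose the structure spaces X and Y are subsets of a common metric space (Z,d_Z), and equip Z×Ω with the metric \tilde d((x,a),(y,b)) = (1−α)d(a,b) + α d_Z(x,y). Then for p ≥ 1, q = 1, FGW_{α,p,1}(μ,ν)^p ≤ 2^p · W_p(μ,ν)^p, where W_p is the p-Wasserstein distance on Z×Ω with cost \tilde d. -/
import Mathlib


open MeasureTheory ENNReal Set

noncomputable section

/-- The set of couplings of two probability measures on `X × Ω` and `Y × Ω`. -/
def Couplings {X Y Ω : Type*} [MeasurableSpace X] [MeasurableSpace Y] [MeasurableSpace Ω]
    (μ : Measure (X × Ω)) (ν : Measure (Y × Ω)) : Set (Measure ((X × Ω) × (Y × Ω))) :=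
  {π | π.map Prod.fst = μ ∧ π.map Prod.snd = ν}

/-- The fused Gromov-Wasserstein cost of a coupling `π`, with trade-off `α` and
exponents `p, q`. Here `w.1.1, w.2.1` are the structure points `x, y` and
`w.1.2, w.2.2` the feature points `a, b`. -/
def fgwE {X Y Ω : Type*} [MetricSpace X] [MetricSpace Y] [MetricSpace Ω]
    [MeasurableSpace X] [MeasurableSpace Y] [MeasurableSpace Ω]
    (α p q : ℝ) (π : Measure ((X × Ω) × (Y × Ω))) : ℝ≥0∞ :=
  ∫⁻ w, (∫⁻ w', ENNReal.ofReal
      (((1 - α) * dist w.1.2 w.2.2 ^ q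
        + α * |dist w.1.1 w'.1.1 - dist w.2.1 w'.2.1| ^ q) ^ p) ∂π) ∂π

/-- The fused Gromov-Wasserstein distance. -/
def FGW {X Y Ω : Type*} [MetricSpace X] [MetricSpace Y] [MetricSpace Ω]
    [MeasurableSpace X] [MeasurableSpace Y] [MeasurableSpace Ω]
    (α p q : ℝ) (μ : Measure (X × Ω)) (ν : Measure (Y × Ω)) : ℝ≥0∞ :=
  (⨅ π ∈ Couplings μ ν, fgwE α p q π) ^ (1 / p)


theorem stmt6 {Z Ω : Type*} [MetricSpace Z] [MetricSpace Ω]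
    [CompactSpace Z]
    [MeasurableSpace Z] [BorelSpace Z] [MeasurableSpace Ω] [BorelSpace Ω]
    (μ ν : Measure (Z × Ω)) [IsProbabilityMeasure μ] [IsProbabilityMeasure ν]
    (α p : ℝ) (hα : α ∈ Set.Icc (0 : ℝ) 1) (hp : 1 ≤ p) :
    (FGW α p 1 μ ν) ^ p ≤ (2 : ℝ≥0∞) ^ p *
      ⨅ π ∈ Couplings μ ν,
        ∫⁻ w, ENNReal.ofReal
          (((1 - α) * dist w.1.2 w.2.2 + α * dist w.1.1 w.2.1) ^ p) ∂π := by
  obtain ⟨hα0, hα1⟩ := hα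
  have hp0 : (0:ℝ) < p := lt_of_lt_of_le zero_lt_one hp
  have hp0' : (0:ℝ) ≤ p := hp0.le
  -- the cost function
  set c : (Z × Ω) × (Z × Ω) → ℝ :=
    fun w => (1 - α) * dist w.1.2 w.2.2 + α * dist w.1.1 w.2.1 with hc
  have hcnn : ∀ w, 0 ≤ c w := fun w => by
    have := dist_nonneg (x := w.1.2) (y := w.2.2)
    have := dist_nonneg (x := w.1.1) (y := w.2.1)
    have h1 : (0:ℝ) ≤ 1 - α := by linarith
    positivity
  -- simplify LHS
  have hLHS : (FGW α p 1 μ ν) ^ p = ⨅ π ∈ Couplings μ ν, fgwE α p 1 π := by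
    rw [FGW, ← ENNReal.rpow_mul, one_div_mul_cancel (ne_of_gt hp0), ENNReal.rpow_one]
  rw [hLHS]
  have h2ne0 : ((2:ℝ≥0∞) ^ p) ≠ 0 :=
    ne_of_gt (ENNReal.rpow_pos (by norm_num) (by norm_num))
  have h2net : ((2:ℝ≥0∞) ^ p) ≠ ⊤ :=
    ENNReal.rpow_ne_top_of_nonneg hp0' (by norm_num)
  -- distribute the constant into the infimum
  rw [ENNReal.mul_iInf_of_ne h2ne0 h2net]
  refine iInf_mono fun π => ?_
  rw [ENNReal.mul_iInf_of_ne h2ne0 h2net]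
  refine iInf_mono fun hπ => ?_
  -- π is a probability measure
  have hπuniv : π Set.univ = 1 := by
    have h1 : π Set.univ = (π.map Prod.fst) Set.univ := by
      rw [Measure.map_apply measurable_fst MeasurableSet.univ, Set.preimage_univ]
    rw [h1, hπ.1, measure_univ]
  -- key pointwise bound and integral manipulations
  set I : ℝ≥0∞ := ∫⁻ w, ENNReal.ofReal (c w ^ p) ∂π with hI
  have hCpow : ∀ w, (ENNReal.ofReal (c w)) ^ p = ENNReal.ofReal (c w ^ p) := fun w =>
    ENNReal.ofReal_rpow_of_nonneg (hcnn w) hp0'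
  have key : ∀ w w' : (Z × Ω) × (Z × Ω),
      ENNReal.ofReal (((1 - α) * dist w.1.2 w.2.2 ^ (1:ℝ)
          + α * |dist w.1.1 w'.1.1 - dist w.2.1 w'.2.1| ^ (1:ℝ)) ^ p)
        ≤ (2:ℝ≥0∞) ^ (p - 1) * (ENNReal.ofReal (c w ^ p) + ENNReal.ofReal (c w' ^ p)) := by
    intro w w'
    set S : ℝ := (1 - α) * dist w.1.2 w.2.2 + α * |dist w.1.1 w'.1.1 - dist w.2.1 w'.2.1|
      with hS
    have hSnn : 0 ≤ S := by
      have := dist_nonneg (x := w.1.2) (y := w.2.2)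
      have := abs_nonneg (dist w.1.1 w'.1.1 - dist w.2.1 w'.2.1)
      have h1 : (0:ℝ) ≤ 1 - α := by linarith
      positivity
    have habs : |dist w.1.1 w'.1.1 - dist w.2.1 w'.2.1|
        ≤ dist w.1.1 w.2.1 + dist w'.1.1 w'.2.1 := by
      have := dist_dist_dist_le w.1.1 w'.1.1 w.2.1 w'.2.1
      rwa [Real.dist_eq] at this
    have hSle : S ≤ c w + c w' := by
      have h1 : α * |dist w.1.1 w'.1.1 - dist w.2.1 w'.2.1|
          ≤ α * (dist w.1.1 w.2.1 + dist w'.1.1 w'.2.1) :=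
        mul_le_mul_of_nonneg_left habs hα0
      have h2 : (0:ℝ) ≤ (1 - α) * dist w'.1.2 w'.2.2 := by
        have := dist_nonneg (x := w'.1.2) (y := w'.2.2)
        have h3 : (0:ℝ) ≤ 1 - α := by linarith
        positivity
      simp only [hS, hc]
      nlinarith
    calc ENNReal.ofReal (((1 - α) * dist w.1.2 w.2.2 ^ (1:ℝ)
          + α * |dist w.1.1 w'.1.1 - dist w.2.1 w'.2.1| ^ (1:ℝ)) ^ p)
        = (ENNReal.ofReal S) ^ p := by
          have hA : (1 - α) * dist w.1.2 w.2.2 ^ (1:ℝ)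
              + α * |dist w.1.1 w'.1.1 - dist w.2.1 w'.2.1| ^ (1:ℝ) = S := by
            rw [hS]; simp [Real.rpow_one]
          rw [hA, ENNReal.ofReal_rpow_of_nonneg hSnn hp0']
      _ ≤ (ENNReal.ofReal (c w) + ENNReal.ofReal (c w')) ^ p := by
          refine ENNReal.rpow_le_rpow ?_ hp0'
          rw [← ENNReal.ofReal_add (hcnn w) (hcnn w')]
          exact ENNReal.ofReal_le_ofReal hSle
      _ ≤ (2:ℝ≥0∞) ^ (p - 1) * ((ENNReal.ofReal (c w)) ^ p + (ENNReal.ofReal (c w')) ^ p) :=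
          ENNReal.rpow_add_le_mul_rpow_add_rpow _ _ hp
      _ = (2:ℝ≥0∞) ^ (p - 1) * (ENNReal.ofReal (c w ^ p) + ENNReal.ofReal (c w' ^ p)) := by
          rw [hCpow, hCpow]
  have h2p1net : ((2:ℝ≥0∞) ^ (p - 1)) ≠ ⊤ :=
    ENNReal.rpow_ne_top_of_nonneg (by linarith) (by norm_num)
  calc fgwE α p 1 π
      ≤ ∫⁻ w, (2:ℝ≥0∞) ^ (p - 1) * (ENNReal.ofReal (c w ^ p) + I) ∂π := by
        rw [fgwE]
        refine lintegral_mono fun w => ?_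
        calc (∫⁻ w', ENNReal.ofReal (((1 - α) * dist w.1.2 w.2.2 ^ (1:ℝ)
              + α * |dist w.1.1 w'.1.1 - dist w.2.1 w'.2.1| ^ (1:ℝ)) ^ p) ∂π)
            ≤ ∫⁻ w', (2:ℝ≥0∞) ^ (p - 1)
                  * (ENNReal.ofReal (c w ^ p) + ENNReal.ofReal (c w' ^ p)) ∂π :=
              lintegral_mono fun w' => key w w'
          _ = (2:ℝ≥0∞) ^ (p - 1) * (ENNReal.ofReal (c w ^ p) + I) := by
              rw [lintegral_const_mul' _ _ h2p1net,
                lintegral_add_left measurable_const, lintegral_const, hπuniv, mul_one]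
      _ = (2:ℝ≥0∞) ^ (p - 1) * (I + I) := by
        rw [lintegral_const_mul' _ _ h2p1net,
          lintegral_add_right _ measurable_const, lintegral_const, hπuniv, mul_one]
      _ = (2:ℝ≥0∞) ^ p * I := by
        rw [← two_mul, ← mul_assoc]
        congr 1
        have h21 : (2:ℝ≥0∞) ^ (p - 1) * 2 = 2 ^ (p - 1) * 2 ^ (1:ℝ) := by
          rw [ENNReal.rpow_one]
        rw [h21, ← ENNReal.rpow_add _ _ (by norm_num) (by norm_num)]
        norm_num

end
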